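/- Let N : ℝ_{≥0} → ℝ be a nondecreasing locally integrable function, let k be a positive integer and y > 0. Then for every X ≥ 0, A^0_N(X) ≤ y^{−k} Δ_y^{(k)}[A^k_N](X) ≤ A^0_N(X + ky), where A^0_N = N. -/
import Mathlib


/-!
STATEMENT 19: For a nondecreasing locally integrable N : ℝ_{≥0} → ℝ, k ≥ 1, y > 0
and X ≥ 0, one has A⁰_N(X) ≤ y^{-k} Δ_y^{(k)}[A^k_N](X) ≤ A⁰_N(X + ky), where
A^k_N(X) = ∫_0^X ⋯ ∫_0^{x_{k-1}} N(x_k) dx_k ⋯ dx_1 is the k-fold smoothing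
(A⁰_N = N) and Δ_y is the difference operator f ↦ (x ↦ f(x+y) - f x).
-/

/-- The finite difference operator `Δ_y` (real-valued version). -/
def diffDeltaR (y : ℝ) (f : ℝ → ℝ) : ℝ → ℝ := fun x => f (x + y) - f x

/-- The k-fold smoothing `A^k_N` of `N`; `A⁰_N = N`. -/
noncomputable def smoothA (N : ℝ → ℝ) : ℕ → ℝ → ℝ
  | 0 => N
  | k + 1 => fun X => ∫ x in (0:ℝ)..X, smoothA N k x

open MeasureTheory intervalIntegral

/-- Integrable on every `[0, b]`. -/
def LocIntNN (f : ℝ → ℝ) : Prop := ∀ b, 0 ≤ b → IntervalIntegrable f volume 0 b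

lemma LocIntNN.mono' {f : ℝ → ℝ} (hf : LocIntNN f) {a b : ℝ} (ha : 0 ≤ a) (hab : a ≤ b) :
    IntervalIntegrable f volume a b := by
  refine (hf b (ha.trans hab)).mono_set ?_
  rw [Set.uIcc_of_le hab, Set.uIcc_of_le (ha.trans hab)]
  exact Set.Icc_subset_Icc ha le_rfl

lemma LocIntNN.shift {f : ℝ → ℝ} (hf : LocIntNN f) {c : ℝ} (hc : 0 ≤ c) :
    LocIntNN (fun x => f (x + c)) := by
  intro b hb
  have := (hf.mono' hc (by linarith : c ≤ b + c)).comp_add_right c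
  simpa using this

lemma LocIntNN.delta {f : ℝ → ℝ} {y : ℝ} (hf : LocIntNN f) (hy : 0 ≤ y) :
    LocIntNN (diffDeltaR y f) := fun b hb => ((hf.shift hy) b hb).sub (hf b hb)

lemma LocIntNN.iter {f : ℝ → ℝ} {y : ℝ} (hy : 0 ≤ y) (hf : LocIntNN f) :
    ∀ k, LocIntNN ((diffDeltaR y)^[k] f)
  | 0 => hf
  | k + 1 => by
      rw [Function.iterate_succ_apply]
      exact (hf.delta hy).iter hy k

lemma delta_iter_congr {y : ℝ} (hy : 0 ≤ y) :
    ∀ (k : ℕ) {g h : ℝ → ℝ}, (∀ z, 0 ≤ z → g z = h z) →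
      ∀ x, 0 ≤ x → (diffDeltaR y)^[k] g x = (diffDeltaR y)^[k] h x
  | 0, g, h, hgh, x, hx => hgh x hx
  | k + 1, g, h, hgh, x, hx => by
      rw [Function.iterate_succ_apply, Function.iterate_succ_apply]
      refine delta_iter_congr hy k (fun z hz => ?_) x hx
      unfold diffDeltaR
      rw [hgh z hz, hgh (z + y) (by linarith)]

lemma delta_T {y : ℝ} {f : ℝ → ℝ} (hy : 0 < y) (hf : LocIntNN f) (x : ℝ) (hx : 0 ≤ x) :
    diffDeltaR y (fun z => ∫ t in z..(z + y), f t) x = ∫ t in x..(x + y), diffDeltaR y f t := by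
  unfold diffDeltaR
  have h1 : (∫ t in x..(x + y), f (t + y)) = ∫ t in (x + y)..(x + y + y), f t := by
    rw [intervalIntegral.integral_comp_add_right]
  rw [intervalIntegral.integral_sub ((hf.shift hy.le).mono' hx (by linarith))
        (hf.mono' hx (by linarith)), h1]

lemma iter_delta_T {y : ℝ} (hy : 0 < y) :
    ∀ (k : ℕ) {f : ℝ → ℝ}, LocIntNN f → ∀ x, 0 ≤ x →
      (diffDeltaR y)^[k] (fun z => ∫ t in z..(z + y), f t) x
        = ∫ t in x..(x + y), (diffDeltaR y)^[k] f t
  | 0, f, hf, x, hx => by simp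
  | k + 1, f, hf, x, hx => by
      rw [Function.iterate_succ_apply]
      rw [delta_iter_congr hy.le k (fun z hz => delta_T hy hf z hz) x hx]
      rw [iter_delta_T hy k (hf.delta hy.le) x hx]
      simp only [Function.iterate_succ_apply]

lemma locint_smoothA (N : ℝ → ℝ)
    (hint : MeasureTheory.LocallyIntegrableOn N (Set.Ici 0)) :
    ∀ k, LocIntNN (smoothA N k)
  | 0 => by
      intro b hb
      rw [intervalIntegrable_iff_integrableOn_Icc_of_le hb]
      exact hint.integrableOn_compact_subset
        (Set.Icc_subset_Ici_self) isCompact_Icc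
  | k + 1 => by
      intro b hb
      have hIcc : IntegrableOn (smoothA N k) (Set.Icc 0 b) volume := by
        rw [← intervalIntegrable_iff_integrableOn_Icc_of_le hb]
        exact locint_smoothA N hint k b hb
      have hc : ContinuousOn (smoothA N (k + 1)) (Set.uIcc 0 b) := by
        have := intervalIntegral.continuousOn_primitive_interval
          (by rwa [Set.uIcc_of_le hb] : IntegrableOn (smoothA N k) (Set.uIcc 0 b) volume)
        exact this
      exact hc.intervalIntegrable

lemma smoothA_key (N : ℝ → ℝ) (hmono : MonotoneOn N (Set.Ici 0))
    (hint : MeasureTheory.LocallyIntegrableOn N (Set.Ici 0))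
    {y : ℝ} (hy : 0 < y) :
    ∀ (k : ℕ) (X : ℝ), 0 ≤ X →
      y ^ k * N X ≤ (diffDeltaR y)^[k] (smoothA N k) X ∧
        (diffDeltaR y)^[k] (smoothA N k) X ≤ y ^ k * N (X + k * y) := by
  intro k
  induction k with
  | zero => intro X hX; simp [smoothA]
  | succ k ih =>
      intro X hX
      have hA : LocIntNN (smoothA N k) := locint_smoothA N hint k
      have step1 : ∀ z, 0 ≤ z → diffDeltaR y (smoothA N (k + 1)) z
          = (fun w => ∫ t in w..(w + y), smoothA N k t) z := by
        intro z hz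
        show smoothA N (k + 1) (z + y) - smoothA N (k + 1) z = _
        simp only [smoothA]
        rw [← intervalIntegral.integral_add_adjacent_intervals
          (hA.mono' le_rfl hz) (hA.mono' hz (by linarith))]
        ring
      have main : (diffDeltaR y)^[k + 1] (smoothA N (k + 1)) X
          = ∫ t in X..(X + y), (diffDeltaR y)^[k] (smoothA N k) t := by
        rw [Function.iterate_succ_apply,
          delta_iter_congr hy.le k step1 X hX,
          iter_delta_T hy k hA X hX]
      have hgint : IntervalIntegrable ((diffDeltaR y)^[k] (smoothA N k)) volume X (X + y) :=
        (hA.iter hy.le k).mono' hX (by linarith)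
      have hXy : X ≤ X + y := by linarith
      constructor
      · rw [main]
        have hlow : ∀ t ∈ Set.Icc X (X + y),
            y ^ k * N X ≤ (diffDeltaR y)^[k] (smoothA N k) t := by
          intro t ht
          have ht0 : (0:ℝ) ≤ t := hX.trans ht.1
          refine le_trans ?_ (ih t ht0).1
          exact mul_le_mul_of_nonneg_left (hmono hX ht0 ht.1) (pow_nonneg hy.le k)
        calc y ^ (k + 1) * N X = ∫ _t in X..(X + y), y ^ k * N X := by
              rw [intervalIntegral.integral_const]
              simp only [smul_eq_mul]
              ring
          _ ≤ _ := intervalIntegral.integral_mono_on hXy intervalIntegrable_const hgint hlow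
      · rw [main]
        have harg : X + (↑(k + 1) : ℝ) * y = (X + y) + (k : ℝ) * y := by push_cast; ring
        have hhigh : ∀ t ∈ Set.Icc X (X + y),
            (diffDeltaR y)^[k] (smoothA N k) t ≤ y ^ k * N ((X + y) + (k:ℝ) * y) := by
          intro t ht
          have ht0 : (0:ℝ) ≤ t := hX.trans ht.1
          refine le_trans (ih t ht0).2 ?_
          refine mul_le_mul_of_nonneg_left ?_ (pow_nonneg hy.le k)
          refine hmono ?_ ?_ (by linarith [ht.2] : t + (k:ℝ) * y ≤ X + y + (k:ℝ) * y)
          · have : 0 ≤ (k:ℝ) * y := by positivity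
            exact Set.mem_Ici.2 (by linarith)
          · have : 0 ≤ (k:ℝ) * y := by positivity
            exact Set.mem_Ici.2 (by linarith)
        calc (∫ t in X..(X + y), (diffDeltaR y)^[k] (smoothA N k) t)
            ≤ ∫ _t in X..(X + y), y ^ k * N ((X + y) + (k:ℝ) * y) :=
              intervalIntegral.integral_mono_on hXy hgint intervalIntegrable_const hhigh
          _ = y ^ (k + 1) * N (X + (↑(k + 1) : ℝ) * y) := by
              rw [intervalIntegral.integral_const, harg]
              simp only [smul_eq_mul]
              ring

theorem smoothA_unsmoothing (N : ℝ → ℝ) (hmono : MonotoneOn N (Set.Ici 0))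
    (hint : MeasureTheory.LocallyIntegrableOn N (Set.Ici 0))
    (k : ℕ) (hk : 0 < k) (y : ℝ) (hy : 0 < y) (X : ℝ) (hX : 0 ≤ X) :
    N X ≤ (y ^ k)⁻¹ * (diffDeltaR y)^[k] (smoothA N k) X ∧
      (y ^ k)⁻¹ * (diffDeltaR y)^[k] (smoothA N k) X ≤ N (X + k * y) := by
  obtain ⟨h1, h2⟩ := smoothA_key N hmono hint hy k X hX
  have hyk : (0:ℝ) < y ^ k := pow_pos hy k
  constructor
  · have := mul_le_mul_of_nonneg_left h1 (inv_nonneg.2 hyk.le)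
    rwa [← mul_assoc, inv_mul_cancel₀ hyk.ne', one_mul] at this
  · have := mul_le_mul_of_nonneg_left h2 (inv_nonneg.2 hyk.le)
    rwa [← mul_assoc, inv_mul_cancel₀ hyk.ne', one_mul] at this
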